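/- Let n ≥ 1, D ≥ 1, let H be a nonzero Hermitian n×n complex matrix, let ε > 0, let e₀ be a unit vector in ℂ^n, and let U : ℝ^D → U(n) be any map into the unitary group which is (ε/(4‖H‖))-state-expressive in the sense that for every pair of unit vectors ψ₀, ψ ∈ ℂ^n there exists θ ∈ ℝ^D with ‖U(θ)·ψ₀ − ψ‖ ≤ ε/(4‖H‖). Define C(θ) := ⟨U(θ)e₀, H·U(θ)e₀⟩ and, for arbitrary unitary matrices Q, Q̃ ∈ U(n), the transformed cost C̃(θ) := ⟨Q̃·U(θ)·Q·e₀, H·Q̃·U(θ)·Q·e₀⟩. Then | inf_{θ∈ℝ^D} C(θ) − inf_{θ∈ℝ^D} C̃(θ) | ≤ ε. (Hence the Linear Clifford Encoder transformation does not compromise the quality of the global minimum of the optimization landscape.) -/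

import Mathlib

open Matrix

/-- The action of an `n × n` complex matrix on the Euclidean space `ℂ^n` (with the standard
Hermitian inner product), as a continuous linear map. -/
noncomputable def matAct {n : ℕ} (M : Matrix (Fin n) (Fin n) ℂ)
    (v : EuclideanSpace ℂ (Fin n)) : EuclideanSpace ℂ (Fin n) :=
  Matrix.toEuclideanCLM (𝕜 := ℂ) M v

/-- The operator norm of an `n × n` complex matrix acting on Euclidean space `ℂ^n`. -/
noncomputable def matOpNorm {n : ℕ} (M : Matrix (Fin n) (Fin n) ℂ) : ℝ :=
  ‖Matrix.toEuclideanCLM (𝕜 := ℂ) M‖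

/-- Let `H ≠ 0` be Hermitian, `ε > 0`, `e₀` a unit vector, and let
`U : ℝ^D → U(n)` be `(ε/(4‖H‖))`-state-expressive: for all unit vectors `ψ₀, ψ` there is a
`θ` with `‖U(θ)ψ₀ − ψ‖ ≤ ε/(4‖H‖)`.  With `C(θ) := ⟨U(θ)e₀, H U(θ)e₀⟩` and, for arbitrary
unitaries `Q, Q̃`, `C̃(θ) := ⟨Q̃U(θ)Q e₀, H Q̃U(θ)Q e₀⟩`, one has
`|inf C − inf C̃| ≤ ε`: the LCE transformation preserves the global minimum quality. -/
lemma matAct_mul {n : ℕ} (A B : Matrix (Fin n) (Fin n) ℂ) (v : EuclideanSpace ℂ (Fin n)) :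
    matAct (A*B) v = matAct A (matAct B v) := by
  simp [matAct, _root_.map_mul]

lemma matAct_sub {n : ℕ} (A : Matrix (Fin n) (Fin n) ℂ) (v w : EuclideanSpace ℂ (Fin n)) :
    matAct A (v - w) = matAct A v - matAct A w := by
  simp [matAct]

lemma matAct_norm {n : ℕ} (M : Matrix (Fin n) (Fin n) ℂ) (hM : Mᴴ * M = 1)
    (v : EuclideanSpace ℂ (Fin n)) : ‖matAct M v‖ = ‖v‖ := by
  have h : ContinuousLinearMap.adjoint (Matrix.toEuclideanCLM (𝕜 := ℂ) M)
      = Matrix.toEuclideanCLM (𝕜 := ℂ) Mᴴ := by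
    rw [← ContinuousLinearMap.star_eq_adjoint, ← map_star]; rfl
  have h2 : (inner ℂ (matAct M v) (matAct M v) : ℂ) = inner ℂ v v := by
    rw [matAct, ← ContinuousLinearMap.adjoint_inner_left, h]
    show (inner ℂ (matAct Mᴴ (matAct M v)) v : ℂ) = _
    rw [← matAct_mul, hM]
    simp [matAct, _root_.map_one]
  have h4 : ‖matAct M v‖^2 = ‖v‖^2 := by
    rw [norm_sq_eq_re_inner (𝕜 := ℂ), norm_sq_eq_re_inner (𝕜 := ℂ), h2]
  nlinarith [norm_nonneg (matAct M v), norm_nonneg v]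

lemma matAct_norm_le {n : ℕ} (M : Matrix (Fin n) (Fin n) ℂ) (v : EuclideanSpace ℂ (Fin n)) :
    ‖matAct M v‖ ≤ matOpNorm M * ‖v‖ :=
  ContinuousLinearMap.le_opNorm _ v

/-- Rayleigh cost bound. -/
lemma cost_abs_le {n : ℕ} (H : Matrix (Fin n) (Fin n) ℂ) (ψ : EuclideanSpace ℂ (Fin n))
    (hψ : ‖ψ‖ = 1) : |((inner ℂ ψ (matAct H ψ) : ℂ)).re| ≤ matOpNorm H := by
  calc |((inner ℂ ψ (matAct H ψ) : ℂ)).re| ≤ ‖(inner ℂ ψ (matAct H ψ) : ℂ)‖ :=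
        Complex.abs_re_le_norm _
    _ ≤ ‖ψ‖ * ‖matAct H ψ‖ := norm_inner_le_norm _ _
    _ ≤ ‖ψ‖ * (matOpNorm H * ‖ψ‖) := by
        gcongr; exact matAct_norm_le H ψ
    _ = matOpNorm H := by rw [hψ]; ring

lemma cost_lip {n : ℕ} (H : Matrix (Fin n) (Fin n) ℂ) (ψ φ : EuclideanSpace ℂ (Fin n))
    (hψ : ‖ψ‖ = 1) (hφ : ‖φ‖ = 1) :
    |((inner ℂ ψ (matAct H ψ) : ℂ)).re - ((inner ℂ φ (matAct H φ) : ℂ)).re|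
      ≤ 2 * matOpNorm H * ‖ψ - φ‖ := by
  have key : (inner ℂ ψ (matAct H ψ) : ℂ) - inner ℂ φ (matAct H φ)
      = inner ℂ (ψ - φ) (matAct H ψ) + inner ℂ φ (matAct H (ψ - φ)) := by
    rw [matAct_sub]
    simp only [inner_sub_left, inner_sub_right]
    ring
  calc |((inner ℂ ψ (matAct H ψ) : ℂ)).re - ((inner ℂ φ (matAct H φ) : ℂ)).re|
      = |((inner ℂ ψ (matAct H ψ) : ℂ) - inner ℂ φ (matAct H φ)).re| := by
        rw [Complex.sub_re]
    _ ≤ ‖(inner ℂ ψ (matAct H ψ) : ℂ) - inner ℂ φ (matAct H φ)‖ := Complex.abs_re_le_norm _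
    _ = ‖(inner ℂ (ψ - φ) (matAct H ψ) : ℂ) + inner ℂ φ (matAct H (ψ - φ))‖ := by rw [key]
    _ ≤ ‖(inner ℂ (ψ - φ) (matAct H ψ) : ℂ)‖ + ‖(inner ℂ φ (matAct H (ψ - φ)) : ℂ)‖ :=
        norm_add_le _ _
    _ ≤ ‖ψ - φ‖ * ‖matAct H ψ‖ + ‖φ‖ * ‖matAct H (ψ - φ)‖ := by
        gcongr <;> exact norm_inner_le_norm _ _
    _ ≤ ‖ψ - φ‖ * (matOpNorm H * ‖ψ‖) + ‖φ‖ * (matOpNorm H * ‖ψ - φ‖) := by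
        gcongr <;> exact matAct_norm_le H _
    _ = 2 * matOpNorm H * ‖ψ - φ‖ := by rw [hψ, hφ]; ring

theorem stmt18 (n D : ℕ) (hn : 1 ≤ n) (hD : 1 ≤ D)
    (H : Matrix (Fin n) (Fin n) ℂ) (hHherm : Hᴴ = H) (hH0 : H ≠ 0)
    (ε : ℝ) (hε : 0 < ε)
    (e₀ : EuclideanSpace ℂ (Fin n)) (he₀ : ‖e₀‖ = 1)
    (U : (Fin D → ℝ) → Matrix (Fin n) (Fin n) ℂ)
    (hU : ∀ θ, (U θ)ᴴ * U θ = 1 ∧ U θ * (U θ)ᴴ = 1)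
    (hexpr : ∀ ψ₀ ψ : EuclideanSpace ℂ (Fin n), ‖ψ₀‖ = 1 → ‖ψ‖ = 1 →
      ∃ θ : Fin D → ℝ, ‖matAct (U θ) ψ₀ - ψ‖ ≤ ε / (4 * matOpNorm H))
    (Q Qt : Matrix (Fin n) (Fin n) ℂ)
    (hQ : Qᴴ * Q = 1 ∧ Q * Qᴴ = 1) (hQt : Qtᴴ * Qt = 1 ∧ Qt * Qtᴴ = 1) :
    |(⨅ θ : Fin D → ℝ,
        ((inner ℂ (matAct (U θ) e₀) (matAct H (matAct (U θ) e₀)) : ℂ)).re) -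
      (⨅ θ : Fin D → ℝ,
        ((inner ℂ (matAct (Qt * U θ * Q) e₀)
            (matAct H (matAct (Qt * U θ * Q) e₀)) : ℂ)).re)| ≤ ε := by
  -- ‖H‖ > 0
  have hHop : 0 < matOpNorm H := by
    rw [matOpNorm, norm_pos_iff]
    intro hc
    apply hH0
    have := congrArg (fun T : EuclideanSpace ℂ (Fin n) →L[ℂ] EuclideanSpace ℂ (Fin n) =>
      (Matrix.toEuclideanCLM (𝕜 := ℂ) (n := Fin n)).symm T) hc
    simpa using this
  set δ : ℝ := ε / (4 * matOpNorm H) with hδdef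
  have hδmul : 2 * matOpNorm H * δ = ε / 2 := by
    rw [hδdef, mul_div_assoc', div_eq_div_iff (by positivity) (by norm_num)]; ring
  -- the two cost functions
  set f : EuclideanSpace ℂ (Fin n) → ℝ :=
    fun ψ => ((inner ℂ ψ (matAct H ψ) : ℂ)).re with hf
  set C : (Fin D → ℝ) → ℝ := fun θ => f (matAct (U θ) e₀) with hC
  set Ct : (Fin D → ℝ) → ℝ := fun θ => f (matAct (Qt * U θ * Q) e₀) with hCt
  -- unit vectors
  have hunit1 : ∀ θ, ‖matAct (U θ) e₀‖ = 1 := fun θ => by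
    rw [matAct_norm _ (hU θ).1, he₀]
  have hunit2 : ∀ θ, ‖matAct (Qt * U θ * Q) e₀‖ = 1 := fun θ => by
    rw [matAct_mul, matAct_mul, matAct_norm _ hQt.1, matAct_norm _ (hU θ).1,
      matAct_norm _ hQ.1, he₀]
  -- bddBelow
  have hbdd1 : BddBelow (Set.range C) := by
    refine ⟨-(matOpNorm H), ?_⟩
    rintro x ⟨θ, rfl⟩
    have := cost_abs_le H _ (hunit1 θ)
    simp only [hC, hf]
    exact neg_le_of_abs_le this
  have hbdd2 : BddBelow (Set.range Ct) := by
    refine ⟨-(matOpNorm H), ?_⟩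
    rintro x ⟨θ, rfl⟩
    have := cost_abs_le H _ (hunit2 θ)
    simp only [hCt, hf]
    exact neg_le_of_abs_le this
  -- inequality 1 : infC ≤ Ct θ + ε/2
  have h1 : ∀ θ, (⨅ θ', C θ') ≤ Ct θ + ε / 2 := by
    intro θ
    obtain ⟨θ', hθ'⟩ := hexpr e₀ (matAct (Qt * U θ * Q) e₀) he₀ (hunit2 θ)
    have hl := cost_lip H (matAct (U θ') e₀) (matAct (Qt * U θ * Q) e₀)
      (hunit1 θ') (hunit2 θ)
    have hle : C θ' ≤ Ct θ + ε / 2 := by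
      have h2 : 2 * matOpNorm H * ‖matAct (U θ') e₀ - matAct (Qt * U θ * Q) e₀‖
          ≤ ε / 2 := by
        rw [← hδmul]; gcongr
      have := abs_le.mp (hl.trans h2)
      simp only [hC, hCt]
      linarith [this.2]
    exact (ciInf_le hbdd1 θ').trans hle
  -- inequality 2 : infCt ≤ C θ + ε/2
  have h2 : ∀ θ, (⨅ θ', Ct θ') ≤ C θ + ε / 2 := by
    intro θ
    have hQe : ‖matAct Q e₀‖ = 1 := by rw [matAct_norm _ hQ.1, he₀]
    have hQtH : Qtᴴᴴ * Qtᴴ = 1 := by rw [conjTranspose_conjTranspose]; exact hQt.2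
    have hQtψ : ‖matAct Qtᴴ (matAct (U θ) e₀)‖ = 1 := by
      rw [matAct_norm _ hQtH, hunit1 θ]
    obtain ⟨θ', hθ'⟩ := hexpr (matAct Q e₀) (matAct Qtᴴ (matAct (U θ) e₀)) hQe hQtψ
    have hkey : ‖matAct (Qt * U θ' * Q) e₀ - matAct (U θ) e₀‖
        = ‖matAct (U θ') (matAct Q e₀) - matAct Qtᴴ (matAct (U θ) e₀)‖ := by
      have e1 : matAct (Qt * U θ' * Q) e₀
          = matAct Qt (matAct (U θ') (matAct Q e₀)) := by
        rw [matAct_mul, matAct_mul]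
      have e2 : matAct (U θ) e₀ = matAct Qt (matAct Qtᴴ (matAct (U θ) e₀)) := by
        rw [← matAct_mul, hQt.2]
        simp [matAct, _root_.map_one]
      rw [e1, e2, ← matAct_sub, matAct_norm _ hQt.1, ← e2]
    have hl := cost_lip H (matAct (Qt * U θ' * Q) e₀) (matAct (U θ) e₀)
      (hunit2 θ') (hunit1 θ)
    have hle : Ct θ' ≤ C θ + ε / 2 := by
      have hb : 2 * matOpNorm H * ‖matAct (Qt * U θ' * Q) e₀ - matAct (U θ) e₀‖
          ≤ ε / 2 := by
        rw [← hδmul, hkey]; gcongr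
      have := abs_le.mp (hl.trans hb)
      simp only [hC, hCt]
      linarith [this.2]
    exact (ciInf_le hbdd2 θ').trans hle
  -- conclude
  have hDne : Nonempty (Fin D → ℝ) := inferInstance
  have hA : (⨅ θ', C θ') ≤ (⨅ θ', Ct θ') + ε / 2 := by
    have : (⨅ θ', C θ') - ε / 2 ≤ ⨅ θ', Ct θ' :=
      le_ciInf fun θ => by linarith [h1 θ]
    linarith
  have hB : (⨅ θ', Ct θ') ≤ (⨅ θ', C θ') + ε / 2 := by
    have : (⨅ θ', Ct θ') - ε / 2 ≤ ⨅ θ', C θ' :=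
      le_ciInf fun θ => by linarith [h2 θ]
    linarith
  rw [abs_le]
  constructor <;> [skip; skip] <;>
    simp only [hC, hCt, hf] at hA hB ⊢ <;> linarith
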